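/- arXiv:1906.00731 — 3 statements merged into one kernel-verified Lean document; each statement's English description precedes it below -/
import Mathlib

section
/- For a real d×d matrix J whose symmetric part S = (J + Jᵀ)/2 satisfies S ⪰ √α · I (i.e., the smallest eigenvalue of S is at least √α) and whose largest singular value squared is at most β, and with step size γ = √α/β, one has (I − γJ)ᵀ(I − γJ) ⪯ (1 − α/β) I in the Loewner order. -/
open Matrix Finset

lemma smul_posSemidef {n : Type*} [Fintype n] {A : Matrix n n ℝ} (hA : A.PosSemidef)
    {c : ℝ} (hc : 0 ≤ c) : (c • A).PosSemidef := by
  refine posSemidef_iff_dotProduct_mulVec.mpr ⟨by rw [IsHermitian, conjTranspose_smul, hA.1.eq]; simp, fun x => ?_⟩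
  have := hA.dotProduct_mulVec_nonneg x
  simp only [smul_mulVec, dotProduct_smul, smul_eq_mul]
  positivity

lemma sub_smul_one_posSemidef {n : Type*} [Fintype n] [DecidableEq n]
    {A : Matrix n n ℝ} (hA : A.IsHermitian) {c : ℝ}
    (h : ∀ i, c ≤ hA.eigenvalues i) : (A - c • 1).PosSemidef := by
  have hU : (hA.eigenvectorUnitary : Matrix n n ℝ) *
      star (hA.eigenvectorUnitary : Matrix n n ℝ) = 1 :=
    (Matrix.mem_unitaryGroup_iff).mp hA.eigenvectorUnitary.2
  have key : A - c • 1 =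
      (hA.eigenvectorUnitary : Matrix n n ℝ) *
        diagonal (fun i => hA.eigenvalues i - c) *
        star (hA.eigenvectorUnitary : Matrix n n ℝ) := by
    have h1 : (c • (1 : Matrix n n ℝ)) =
        (hA.eigenvectorUnitary : Matrix n n ℝ) * (c • 1) *
          star (hA.eigenvectorUnitary : Matrix n n ℝ) := by
      rw [mul_smul_comm, smul_mul_assoc, mul_one, hU]
    conv_lhs => rw [hA.spectral_theorem, Unitary.conjStarAlgAut_apply, h1]
    rw [← sub_mul, ← mul_sub]
    congr 2
    ext i j
    rcases eq_or_ne i j with rfl | hij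
    · simp
    · simp [Matrix.one_apply_ne hij, diagonal_apply_ne _ hij]
  rw [key]
  exact (posSemidef_diagonal_iff.mpr (by simpa using fun i => sub_nonneg.mpr (h i))
    ).mul_mul_conjTranspose_same _

lemma smul_one_sub_posSemidef {n : Type*} [Fintype n] [DecidableEq n]
    {A : Matrix n n ℝ} (hA : A.IsHermitian) {c : ℝ}
    (h : ∀ i, hA.eigenvalues i ≤ c) : (c • 1 - A).PosSemidef := by
  have hU : (hA.eigenvectorUnitary : Matrix n n ℝ) *
      star (hA.eigenvectorUnitary : Matrix n n ℝ) = 1 :=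
    (Matrix.mem_unitaryGroup_iff).mp hA.eigenvectorUnitary.2
  have key : c • 1 - A =
      (hA.eigenvectorUnitary : Matrix n n ℝ) *
        diagonal (fun i => c - hA.eigenvalues i) *
        star (hA.eigenvectorUnitary : Matrix n n ℝ) := by
    have h1 : (c • (1 : Matrix n n ℝ)) =
        (hA.eigenvectorUnitary : Matrix n n ℝ) * (c • 1) *
          star (hA.eigenvectorUnitary : Matrix n n ℝ) := by
      rw [mul_smul_comm, smul_mul_assoc, mul_one, hU]
    conv_lhs => rw [hA.spectral_theorem, Unitary.conjStarAlgAut_apply, h1]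
    rw [← sub_mul, ← mul_sub]
    congr 2
    ext i j
    rcases eq_or_ne i j with rfl | hij
    · simp
    · simp [Matrix.one_apply_ne hij, diagonal_apply_ne _ hij]
  rw [key]
  exact (posSemidef_diagonal_iff.mpr (by simpa using fun i => sub_nonneg.mpr (h i))
    ).mul_mul_conjTranspose_same _

/-- If the symmetric part `S = (J + Jᵀ)/2` of a real `d × d` matrix `J` satisfies
`λ_min(S) ≥ √α` and `λ_max(JᵀJ) ≤ β`, then with `γ = √α/β` one has
`(I − γJ)ᵀ(I − γJ) ⪯ (1 − α/β)·I` in the Loewner order. -/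
theorem contraction_loewner_bound
    (d : ℕ) (J S : Matrix (Fin (d + 1)) (Fin (d + 1)) ℝ) (α β γ : ℝ)
    (hSdef : S = (1 / 2 : ℝ) • (J + Jᵀ))
    (hS : S.IsHermitian) (hJ : (Jᵀ * J).IsHermitian)
    (hα : 0 < α) (hβ : 0 < β)
    (hSmin : Real.sqrt α ≤ univ.inf' univ_nonempty hS.eigenvalues)
    (hJmax : univ.sup' univ_nonempty hJ.eigenvalues ≤ β)
    (hγ : γ = Real.sqrt α / β) :
    ((1 - α / β) • (1 : Matrix (Fin (d + 1)) (Fin (d + 1)) ℝ)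
      - (1 - γ • J)ᵀ * (1 - γ • J)).PosSemidef := by
  have hγ0 : 0 ≤ γ := by rw [hγ]; positivity
  have hP1 : (S - Real.sqrt α • 1).PosSemidef :=
    sub_smul_one_posSemidef hS fun i => hSmin.trans (inf'_le _ (mem_univ i))
  have hP2 : (β • 1 - Jᵀ * J).PosSemidef :=
    smul_one_sub_posSemidef hJ fun i => (le_sup' _ (mem_univ i)).trans hJmax
  have hγa : γ * Real.sqrt α = α / β := by
    rw [hγ, div_mul_eq_mul_div, Real.mul_self_sqrt hα.le]
  have hγ2 : γ ^ 2 * β = γ * Real.sqrt α := by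
    rw [hγa, hγ, div_pow, Real.sq_sqrt hα.le]
    field_simp
  have key : (1 - α / β) • (1 : Matrix (Fin (d + 1)) (Fin (d + 1)) ℝ)
      - (1 - γ • J)ᵀ * (1 - γ • J)
      = (2 * γ) • (S - Real.sqrt α • 1) + (γ ^ 2) • (β • 1 - Jᵀ * J) := by
    rw [hSdef, ← hγa]
    simp only [transpose_sub, transpose_one, transpose_smul, sub_mul, mul_sub,
      one_mul, mul_one, smul_mul_assoc, mul_smul_comm, smul_sub, smul_add,
      smul_smul, sub_smul, one_smul]
    rw [hγ2]
    module
  rw [key]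
  exact (smul_posSemidef hP1 (by positivity)).add (smul_posSemidef hP2 (by positivity))
end

section
/- Let J be a d×d real matrix and Λ a positive diagonal matrix with entries in (0,1] and minimal entry 1/k_min-scaled structure as above. If the symmetric part of ΛJ, denoted S̃, satisfies λ_min(S̃) ≥ √α / k_min for some α with 0 < α < k_min β and λ_max(JᵀJ) ≤ β, then with γ = √α/β, (I − γΛJ)ᵀ(I − γΛJ) ⪯ (1 − α/(β k_min)) I. -/
open Matrix Finset

section Aux

variable {n : Type*} [Fintype n] [DecidableEq n]

lemma psd_smul {A : Matrix n n ℝ} (hA : A.PosSemidef) {c : ℝ} (hc : 0 ≤ c) :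
    (c • A).PosSemidef := by
  constructor
  · unfold Matrix.IsHermitian
    rw [conjTranspose_smul, hA.1]
    simp
  · intro x
    have := hA.2 x
    exact (hA.smul hc).2 x

lemma psd_sub_smul_one {A : Matrix n n ℝ} (hA : A.IsHermitian) {c : ℝ}
    (h : ∀ i, c ≤ hA.eigenvalues i) : (A - c • 1).PosSemidef := by
  set U : Matrix n n ℝ := (Matrix.IsHermitian.eigenvectorUnitary hA : Matrix n n ℝ) with hUdef
  have h1 : U * star U = 1 :=
    (Matrix.mem_unitaryGroup_iff).mp (Matrix.IsHermitian.eigenvectorUnitary hA).2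
  have key : A - c • 1 = U * diagonal (fun i => hA.eigenvalues i - c) * star U := by
    have hD : diagonal (fun i => hA.eigenvalues i - c)
        = diagonal (RCLike.ofReal ∘ hA.eigenvalues) - c • 1 := by
      ext i j
      by_cases hij : i = j <;>
        simp [Matrix.diagonal_apply, hij, Matrix.one_apply, Function.comp]
    rw [hD, Matrix.mul_sub, Matrix.sub_mul, ← (by simpa [hUdef] using Matrix.IsHermitian.spectral_theorem hA :
      A = U * diagonal (RCLike.ofReal ∘ hA.eigenvalues) * star U)]
    rw [Matrix.mul_smul, Matrix.smul_mul, mul_one, h1]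
  rw [key, Matrix.star_eq_conjTranspose]
  exact (posSemidef_diagonal_iff.mpr fun i => sub_nonneg.mpr (h i)).mul_mul_conjTranspose_same U

lemma psd_smul_one_sub {A : Matrix n n ℝ} (hA : A.IsHermitian) {c : ℝ}
    (h : ∀ i, hA.eigenvalues i ≤ c) : (c • 1 - A).PosSemidef := by
  set U : Matrix n n ℝ := (Matrix.IsHermitian.eigenvectorUnitary hA : Matrix n n ℝ) with hUdef
  have h1 : U * star U = 1 :=
    (Matrix.mem_unitaryGroup_iff).mp (Matrix.IsHermitian.eigenvectorUnitary hA).2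
  have key : c • 1 - A = U * diagonal (fun i => c - hA.eigenvalues i) * star U := by
    have hD : diagonal (fun i => c - hA.eigenvalues i)
        = c • 1 - diagonal (RCLike.ofReal ∘ hA.eigenvalues) := by
      ext i j
      by_cases hij : i = j <;>
        simp [Matrix.diagonal_apply, hij, Matrix.one_apply, Function.comp]
    rw [hD, Matrix.mul_sub, Matrix.sub_mul, ← (by simpa [hUdef] using Matrix.IsHermitian.spectral_theorem hA :
      A = U * diagonal (RCLike.ofReal ∘ hA.eigenvalues) * star U)]
    rw [Matrix.mul_smul, Matrix.smul_mul, mul_one, h1]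
  rw [key, Matrix.star_eq_conjTranspose]
  exact (posSemidef_diagonal_iff.mpr fun i => sub_nonneg.mpr (h i)).mul_mul_conjTranspose_same U

end Aux

/-- Non-uniform learning rate Loewner bound: with `Λ = diag(1/kᵢ)`, `kᵢ ≥ 1`,
`k_min = min kᵢ`, if the symmetric part `S̃` of `ΛJ` satisfies `λ_min(S̃) ≥ √α/k_min`,
`0 < α < k_min β`, `λ_max(JᵀJ) ≤ β`, then with `γ = √α/β`,
`(I − γΛJ)ᵀ(I − γΛJ) ⪯ (1 − α/(β k_min))·I`. -/
theorem nonuniform_rate_loewner_bound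
    (d : ℕ) (J Λ Stilde : Matrix (Fin (d + 1)) (Fin (d + 1)) ℝ)
    (k : Fin (d + 1) → ℝ) (α β γ : ℝ)
    (hk : ∀ i, 1 ≤ k i)
    (hΛ : Λ = Matrix.diagonal fun i => 1 / k i)
    (hStilde : Stilde = (1 / 2 : ℝ) • ((Λ * J)ᵀ + Λ * J))
    (hS : Stilde.IsHermitian) (hJ : (Jᵀ * J).IsHermitian)
    (hα : 0 < α) (hβ : 0 < β)
    (hαβ : α < (univ.inf' univ_nonempty k) * β)
    (hSmin : Real.sqrt α / univ.inf' univ_nonempty k ≤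
      univ.inf' univ_nonempty hS.eigenvalues)
    (hJmax : univ.sup' univ_nonempty hJ.eigenvalues ≤ β)
    (hγ : γ = Real.sqrt α / β) :
    ((1 - α / (β * univ.inf' univ_nonempty k)) •
        (1 : Matrix (Fin (d + 1)) (Fin (d + 1)) ℝ)
      - (1 - γ • (Λ * J))ᵀ * (1 - γ • (Λ * J))).PosSemidef := by
  set m := univ.inf' univ_nonempty k with hm
  set s := Real.sqrt α with hs
  have hs2 : s ^ 2 = α := Real.sq_sqrt hα.le
  have hs0 : 0 < s := Real.sqrt_pos.mpr hα
  have hm1 : (1 : ℝ) ≤ m := le_inf' _ _ fun i _ => hk i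
  have hm0 : (0 : ℝ) < m := lt_of_lt_of_le one_pos hm1
  have hγ0 : 0 < γ := hγ ▸ div_pos hs0 hβ
  have hΛt : Λᵀ = Λ := by rw [hΛ]; exact Matrix.diagonal_transpose _
  -- the three PSD pieces
  have hA : (Stilde - (s / m) • 1).PosSemidef :=
    psd_sub_smul_one hS fun i => le_trans hSmin (inf'_le _ (mem_univ i))
  have hB : ((β : ℝ) • 1 - Jᵀ * J).PosSemidef :=
    psd_smul_one_sub hJ fun i => le_trans (le_sup' _ (mem_univ i)) hJmax
  have hC : (((1 : ℝ) / m ^ 2) • 1 - Λ * Λ).PosSemidef := by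
    rw [hΛ, diagonal_mul_diagonal, ← diagonal_one, ← Matrix.diagonal_smul, diagonal_sub]
    refine posSemidef_diagonal_iff.mpr fun i => sub_nonneg.mpr ?_
    have hki : m ≤ k i := inf'_le _ (mem_univ i)
    have hki0 : 0 < k i := lt_of_lt_of_le hm0 hki
    simp only [Pi.smul_apply, Pi.one_apply, smul_eq_mul, mul_one, Pi.sub_apply]
    rw [div_mul_div_comm, one_mul]
    apply div_le_div_of_nonneg_left one_pos.le (by positivity)
    calc m ^ 2 = m * m := sq m
    _ ≤ k i * k i := mul_le_mul hki hki hm0.le hki0.le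
  have hC' : (Jᵀ * (((1 : ℝ) / m ^ 2) • 1 - Λ * Λ) * J).PosSemidef := by
    have := hC.conjTranspose_mul_mul_same J
    rwa [Matrix.conjTranspose_eq_transpose_of_trivial] at this
  -- the decomposition
  have key : (1 - α / (β * m)) • (1 : Matrix (Fin (d + 1)) (Fin (d + 1)) ℝ)
      - (1 - γ • (Λ * J))ᵀ * (1 - γ • (Λ * J))
      = (2 * γ) • (Stilde - (s / m) • 1)
        + (γ ^ 2) • (Jᵀ * (((1 : ℝ) / m ^ 2) • 1 - Λ * Λ) * J)
        + (γ ^ 2 / m ^ 2) • ((β : ℝ) • 1 - Jᵀ * J)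
        + (α / (β * m) - α / (β * m ^ 2)) • 1 := by
    rw [hStilde, hγ]
    have hβ0 : (β : ℝ) ≠ 0 := hβ.ne'
    have hm0' : (m : ℝ) ≠ 0 := hm0.ne'
    simp only [Matrix.transpose_sub, Matrix.transpose_smul, Matrix.transpose_mul,
      Matrix.transpose_one, hΛt, Matrix.mul_sub, Matrix.sub_mul, Matrix.mul_one,
      Matrix.one_mul, Matrix.smul_mul, Matrix.mul_smul, smul_sub, smul_add, smul_smul,
      Matrix.mul_assoc]
    rw [← hs2]
    match_scalars <;> field_simp <;> ring
  rw [key]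
  refine PosSemidef.add (PosSemidef.add (PosSemidef.add ?_ ?_) ?_) ?_
  · exact psd_smul hA (by positivity)
  · exact psd_smul hC' (by positivity)
  · exact psd_smul hB (by positivity)
  · refine psd_smul (Matrix.PosSemidef.one) ?_
    rw [sub_nonneg]
    apply div_le_div_of_nonneg_left hα.le (by positivity)
    calc β * m = β * m * 1 := (mul_one _).symm
    _ ≤ β * m * m := by nlinarith
    _ = β * m ^ 2 := by ring
end

section
/- Let f₁, …, fₙ : ℝ^{d₁} × ⋯ × ℝ^{dₙ} → ℝ be C² and let x* satisfy ω(x*) = 0 where ω = (D₁f₁, …, Dₙfₙ) collects partial gradients. If moreover Dᵢ²fᵢ(x*) ≻ 0 for each i (so x* is a differential Nash equilibrium), then x* is a strict local Nash equilibrium: for each i there is a neighborhood Wᵢ of xᵢ* such that fᵢ(xᵢ, x₋ᵢ*) > fᵢ(xᵢ*, x₋ᵢ*) for all xᵢ ∈ Wᵢ \ {xᵢ*}. -/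
open Filter Metric Set Asymptotics

set_option maxHeartbeats 1000000

/-- Second derivative test in finite dimension: if `g` is `C²`, its derivative vanishes
at `a`, and the second derivative is positive definite at `a`, then `g` has a strict
local minimum at `a`. -/
lemma strict_local_min_of_posdef {E : Type*} [NormedAddCommGroup E] [NormedSpace ℝ E]
    [FiniteDimensional ℝ E] (g : E → ℝ) (a : E) (hg : ContDiff ℝ 2 g)
    (h1 : fderiv ℝ g a = 0)
    (h2 : ∀ v : E, v ≠ 0 → 0 < fderiv ℝ (fderiv ℝ g) a v v) :
    ∃ W ∈ nhds a, ∀ x ∈ W, x ≠ a → g a < g x := by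
  rcases subsingleton_or_nontrivial E with hE | hE
  · exact ⟨Set.univ, univ_mem, fun x _ hx => absurd (Subsingleton.elim x a) hx⟩
  set Q : E →L[ℝ] E →L[ℝ] ℝ := fderiv ℝ (fderiv ℝ g) a with hQ
  -- coercivity on the sphere
  have hQcont : Continuous fun v : E => Q v v := by
    have := Q.continuous₂
    exact this.comp (continuous_id.prodMk continuous_id)
  obtain ⟨u, hu, humin⟩ : ∃ u ∈ sphere (0 : E) 1, IsMinOn (fun v => Q v v) (sphere 0 1) u :=
    (isCompact_sphere 0 1).exists_isMinOn
      ((NormedSpace.sphere_nonempty).2 zero_le_one) hQcont.continuousOn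
  set c : ℝ := Q u u with hc
  have hcpos : 0 < c := h2 u (by simpa using ne_of_mem_sphere hu one_ne_zero)
  have hcoer : ∀ v : E, c * ‖v‖ ^ 2 ≤ Q v v := by
    intro v
    rcases eq_or_ne v 0 with rfl | hv
    · simp
    · have hnv : ‖v‖ ≠ 0 := norm_ne_zero_iff.2 hv
      have hmem : ‖v‖⁻¹ • v ∈ sphere (0 : E) 1 := by
        simp [norm_smul, abs_of_nonneg (inv_nonneg.2 (norm_nonneg v)),
          inv_mul_cancel₀ hnv]
      have : c ≤ Q (‖v‖⁻¹ • v) (‖v‖⁻¹ • v) := humin hmem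
      have hexp : Q (‖v‖⁻¹ • v) (‖v‖⁻¹ • v) = ‖v‖⁻¹ * (‖v‖⁻¹ * Q v v) := by
        simp [map_smul]
      rw [hexp] at this
      have h2' : c * (‖v‖ * ‖v‖) ≤ Q v v := by
        have h3 := mul_le_mul_of_nonneg_left this
          (mul_nonneg (norm_nonneg v) (norm_nonneg v))
        calc c * (‖v‖ * ‖v‖) = ‖v‖ * ‖v‖ * c := by ring
        _ ≤ ‖v‖ * ‖v‖ * (‖v‖⁻¹ * (‖v‖⁻¹ * Q v v)) := h3
        _ = Q v v := by field_simp
      calc c * ‖v‖ ^ 2 = c * (‖v‖ * ‖v‖) := by ring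
      _ ≤ Q v v := h2'
  -- differentiability facts
  have hg1 : ContDiff ℝ 1 (fderiv ℝ g) := hg.fderiv_right (le_refl 2)
  have hgdiff : Differentiable ℝ g := hg.differentiable two_ne_zero
  have hQder : HasFDerivAt (fderiv ℝ g) Q a :=
    ((hg1.differentiable one_ne_zero) a).hasFDerivAt
  -- little-o estimate for the derivative
  rw [hasFDerivAt_iff_isLittleO_nhds_zero] at hQder
  have hε := (isLittleO_iff.1 hQder) (show (0:ℝ) < c / 2 by linarith)
  rcases Metric.eventually_nhds_iff_ball.1 hε with ⟨δ, hδpos, hδ⟩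
  refine ⟨ball a δ, ball_mem_nhds a hδpos, fun x hx hxa => ?_⟩
  set v : E := x - a with hv
  have hvne : v ≠ 0 := sub_ne_zero.2 hxa
  have hvnorm : ‖v‖ < δ := by simpa [hv, dist_eq_norm] using hx
  have hvpos : 0 < ‖v‖ := norm_pos_iff.2 hvne
  set K : ℝ := c / 2 * ‖v‖ ^ 2 with hK
  have hKpos : 0 < K := by positivity
  -- the auxiliary function ψ
  set ψ : ℝ → ℝ := fun t => g (a + t • v) - t ^ 2 / 2 * K with hψ
  have hφder : ∀ t : ℝ, HasDerivAt (fun s => g (a + s • v)) (fderiv ℝ g (a + t • v) v) t := by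
    intro t
    have hline : HasDerivAt (fun s : ℝ => a + s • v) v t := by
      simpa using ((hasDerivAt_id t).smul_const v).const_add a
    exact ((hgdiff (a + t • v)).hasFDerivAt).comp_hasDerivAt t hline
  have hψder : ∀ t : ℝ, HasDerivAt ψ (fderiv ℝ g (a + t • v) v - t * K) t := by
    intro t
    have h1' : HasDerivAt (fun s : ℝ => s ^ 2 / 2 * K) (t * K) t := by
      have := ((hasDerivAt_pow 2 t).div_const 2).mul_const K
      simpa using this.congr_deriv (by ring)
    exact (hφder t).sub h1'
  -- the derivative estimate on [0,1]
  have hbound : ∀ t ∈ Set.Icc (0:ℝ) 1, 0 ≤ fderiv ℝ g (a + t • v) v - t * K := by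
    intro t ht
    have htv : ‖t • v‖ < δ := by
      rw [norm_smul, Real.norm_eq_abs, abs_of_nonneg ht.1]
      calc t * ‖v‖ ≤ 1 * ‖v‖ := by nlinarith [ht.2, hvpos]
      _ < δ := by simpa using hvnorm
    have hest := hδ (t • v) (mem_ball_zero_iff.2 htv)
    rw [h1] at hest
    simp only [ContinuousLinearMap.coe_sub', Pi.sub_apply, ContinuousLinearMap.zero_apply,
      sub_zero] at hest
    have hest2 : ‖(fderiv ℝ g (a + t • v) - Q (t • v)) v‖
        ≤ c / 2 * ‖t • v‖ * ‖v‖ := by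
      calc ‖(fderiv ℝ g (a + t • v) - Q (t • v)) v‖
          ≤ ‖fderiv ℝ g (a + t • v) - Q (t • v)‖ * ‖v‖ :=
            ContinuousLinearMap.le_opNorm _ v
      _ ≤ c / 2 * ‖t • v‖ * ‖v‖ := by
            apply mul_le_mul_of_nonneg_right hest (norm_nonneg v)
    have habs : |fderiv ℝ g (a + t • v) v - t * Q v v| ≤ c / 2 * (t * ‖v‖ ^ 2) := by
      have : (fderiv ℝ g (a + t • v) - Q (t • v)) v
          = fderiv ℝ g (a + t • v) v - t * Q v v := by
        simp [map_smul, smul_eq_mul]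
      rw [this] at hest2
      rw [Real.norm_eq_abs] at hest2
      calc |fderiv ℝ g (a + t • v) v - t * Q v v| ≤ c / 2 * ‖t • v‖ * ‖v‖ := hest2
      _ = c / 2 * (t * ‖v‖ ^ 2) := by
          rw [norm_smul, Real.norm_eq_abs, abs_of_nonneg ht.1]; ring
    have hQvv : c * ‖v‖ ^ 2 ≤ Q v v := hcoer v
    have h5 := abs_le.1 habs
    have ht0 := ht.1
    nlinarith [h5.1, h5.2, sq_nonneg ‖v‖]
  -- monotonicity of ψ on [0,1]
  have hmono : MonotoneOn ψ (Set.Icc (0:ℝ) 1) := by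
    apply monotoneOn_of_deriv_nonneg (convex_Icc 0 1)
    · exact fun t _ => ((hψder t).continuousAt).continuousWithinAt
    · intro t ht
      exact ((hψder t).differentiableAt).differentiableWithinAt
    · intro t ht
      rw [interior_Icc] at ht
      rw [(hψder t).deriv]
      exact hbound t ⟨ht.1.le, ht.2.le⟩
  have hmain : ψ 0 ≤ ψ 1 :=
    hmono (Set.left_mem_Icc.2 zero_le_one) (Set.right_mem_Icc.2 zero_le_one) zero_le_one
  have h0 : ψ 0 = g a := by simp [hψ]
  have h1' : ψ 1 = g x - K / 2 := by
    simp only [hψ, one_smul, one_pow]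
    rw [show a + v = x by simp [hv]]
    ring
  rw [h0, h1'] at hmain
  linarith

/-- A differential Nash equilibrium is a strict local Nash equilibrium: if each
`fᵢ` is `C²`, the partial gradient of each `fᵢ` in its own variable vanishes at `x*`,
and each block Hessian `Dᵢ²fᵢ(x*)` is positive definite, then for each `i` there is a
neighborhood `Wᵢ` of `xᵢ*` on which `fᵢ(xᵢ, x₋ᵢ*) > fᵢ(x*)` for all `xᵢ ≠ xᵢ*`. -/
theorem differential_nash_is_strict_local_nash
    (n : ℕ) (d : Fin n → ℕ)
    (f : Fin n → ((i : Fin n) → EuclideanSpace ℝ (Fin (d i))) → ℝ)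
    (xstar : (i : Fin n) → EuclideanSpace ℝ (Fin (d i)))
    (hf : ∀ i, ContDiff ℝ 2 (f i))
    (hcrit : ∀ i,
      fderiv ℝ (fun xi => f i (Function.update xstar i xi)) (xstar i) = 0)
    (hpos : ∀ i, ∀ v : EuclideanSpace ℝ (Fin (d i)), v ≠ 0 →
      0 < fderiv ℝ (fderiv ℝ fun xi => f i (Function.update xstar i xi)) (xstar i) v v) :
    ∀ i, ∃ W ∈ nhds (xstar i), ∀ xi ∈ W, xi ≠ xstar i →
      f i xstar < f i (Function.update xstar i xi) := by
  intro i
  have hgC2 : ContDiff ℝ 2 (fun xi => f i (Function.update xstar i xi)) :=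
    (hf i).comp (contDiff_update 2 xstar i)
  obtain ⟨W, hW, hWmin⟩ := strict_local_min_of_posdef
    (fun xi => f i (Function.update xstar i xi)) (xstar i) hgC2 (hcrit i) (hpos i)
  refine ⟨W, hW, fun xi hxi hne => ?_⟩
  have := hWmin xi hxi hne
  simpa [Function.update_eq_self] using this
end
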